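/- The Gaussian curvature of the Riemannian metric on {(x,y) : x,y > 0, (e^x−1)(e^y−1) < 4} with first fundamental form E = e^x(e^y−1)/((e^x−1)D), F = 0, G = (e^x−1)e^y/((e^y−1)D), where D = 4e^{x+y}−3e^x−3e^y+2, equals (2e^{x+y}−1)/D, as computed by the Brioschi formula. -/

import Mathlib

open Real

noncomputable def Ddb (x y : ℝ) : ℝ := 4 * exp (x + y) - 3 * exp x - 3 * exp y + 2

noncomputable def Edb (x y : ℝ) : ℝ := exp x * (exp y - 1) / ((exp x - 1) * Ddb x y)

noncomputable def Gdb (x y : ℝ) : ℝ := (exp x - 1) * exp y / ((exp y - 1) * Ddb x y)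

lemma Ddb_pos {x y : ℝ} (hx : 0 < x) (hy : 0 < y) : 0 < Ddb x y := by
  have ha : 1 < exp x := by simpa using Real.exp_lt_exp.2 hx
  have hb : 1 < exp y := by simpa using Real.exp_lt_exp.2 hy
  have h : Ddb x y = 4*(exp x - 1)*(exp y - 1) + (exp x - 1) + (exp y - 1) := by
    unfold Ddb; rw [Real.exp_add]; ring
  rw [h]; nlinarith

lemma hasDerivAt_D1 (u y : ℝ) :
    HasDerivAt (fun v => Ddb v y) (4 * exp (u + y) - 3 * exp u) u := by
  have h1 : HasDerivAt (fun v : ℝ => exp (v + y)) (exp (u + y)) u := by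
    simpa using ((hasDerivAt_id u).add_const y).exp
  have h2 := ((((h1.const_mul 4).sub ((Real.hasDerivAt_exp u).const_mul 3)).sub_const
      (3 * exp y)).add_const 2)
  exact h2

lemma hasDerivAt_G1 {y : ℝ} (hy : 0 < y) {u : ℝ} (hu : 0 < u) :
    HasDerivAt (fun v => Gdb v y) (exp (u + y) / (Ddb u y) ^ 2) u := by
  have hb : 1 < exp y := by simpa using Real.exp_lt_exp.2 hy
  have hD := Ddb_pos hu hy
  have hb' : 0 < exp y - 1 := by linarith
  have hden : (exp y - 1) * Ddb u y ≠ 0 := ne_of_gt (mul_pos hb' hD)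
  have hN : HasDerivAt (fun v => (exp v - 1) * exp y) (exp u * exp y) u :=
    ((Real.hasDerivAt_exp u).sub_const 1).mul_const _
  have hM : HasDerivAt (fun v => (exp y - 1) * Ddb v y)
      ((exp y - 1) * (4 * exp (u + y) - 3 * exp u)) u := (hasDerivAt_D1 u y).const_mul _
  have h := hN.div hM hden
  have heq : (exp u * exp y * ((exp y - 1) * Ddb u y) -
      (exp u - 1) * exp y * ((exp y - 1) * (4 * exp (u + y) - 3 * exp u))) /
      ((exp y - 1) * Ddb u y) ^ 2 = exp (u + y) / (Ddb u y) ^ 2 := by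
    have hD' : Ddb u y ≠ 0 := ne_of_gt hD
    have hb' : exp y - 1 ≠ 0 := by linarith
    field_simp
    unfold Ddb
    rw [Real.exp_add]
    ring
  rw [heq] at h
  exact h

lemma hasDerivAt_D2 (x u : ℝ) :
    HasDerivAt (fun v => Ddb x v) (4 * exp (x + u) - 3 * exp u) u := by
  have h1 : HasDerivAt (fun v : ℝ => exp (x + v)) (exp (x + u)) u := by
    simpa using ((hasDerivAt_id u).const_add x).exp
  have h2 := ((((h1.const_mul 4).sub_const (3 * exp x)).sub
      ((Real.hasDerivAt_exp u).const_mul 3)).add_const 2)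
  exact h2

lemma hasDerivAt_E2 {x : ℝ} (hx : 0 < x) {u : ℝ} (hu : 0 < u) :
    HasDerivAt (fun v => Edb x v) (exp (x + u) / (Ddb x u) ^ 2) u := by
  have ha : 1 < exp x := by simpa using Real.exp_lt_exp.2 hx
  have hD := Ddb_pos hx hu
  have ha' : 0 < exp x - 1 := by linarith
  have hden : (exp x - 1) * Ddb x u ≠ 0 := ne_of_gt (mul_pos ha' hD)
  have hN : HasDerivAt (fun v => exp x * (exp v - 1)) (exp x * exp u) u :=
    ((Real.hasDerivAt_exp u).sub_const 1).const_mul _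
  have hM : HasDerivAt (fun v => (exp x - 1) * Ddb x v)
      ((exp x - 1) * (4 * exp (x + u) - 3 * exp u)) u := (hasDerivAt_D2 x u).const_mul _
  have h := hN.div hM hden
  have heq : (exp x * exp u * ((exp x - 1) * Ddb x u) -
      exp x * (exp u - 1) * ((exp x - 1) * (4 * exp (x + u) - 3 * exp u))) /
      ((exp x - 1) * Ddb x u) ^ 2 = exp (x + u) / (Ddb x u) ^ 2 := by
    have hD' : Ddb x u ≠ 0 := ne_of_gt hD
    have ha'' : exp x - 1 ≠ 0 := ne_of_gt ha'
    field_simp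
    unfold Ddb
    rw [Real.exp_add]
    ring
  rw [heq] at h
  exact h

lemma sqrtEG {u y : ℝ} (hu : 0 < u) (hy : 0 < y) :
    Real.sqrt (Edb u y * Gdb u y) = exp ((u + y) / 2) / Ddb u y := by
  have ha : 1 < exp u := by simpa using Real.exp_lt_exp.2 hu
  have hb : 1 < exp y := by simpa using Real.exp_lt_exp.2 hy
  have hD := Ddb_pos hu hy
  have ha' : exp u - 1 ≠ 0 := by linarith
  have hb' : exp y - 1 ≠ 0 := by linarith
  have hD' : Ddb u y ≠ 0 := ne_of_gt hD
  have hsq2 : exp ((u + y) / 2) ^ 2 = exp u * exp y := by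
    rw [sq, ← Real.exp_add, show (u+y)/2 + (u+y)/2 = u + y by ring, Real.exp_add]
  have hEG : Edb u y * Gdb u y = (exp ((u + y) / 2) / Ddb u y) ^ 2 := by
    unfold Edb Gdb
    field_simp
    simp only [hsq2, Real.exp_add]
  rw [hEG, Real.sqrt_sq (by positivity)]

lemma hasDerivAt_g1 {y : ℝ} (hy : 0 < y) {u : ℝ} (hu : 0 < u) :
    HasDerivAt (fun v => exp ((v + y) / 2) / Ddb v y)
      ((exp ((u + y) / 2) * (1/2) * Ddb u y -
        exp ((u + y) / 2) * (4 * exp (u + y) - 3 * exp u)) / (Ddb u y) ^ 2) u := by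
  have hD' : Ddb u y ≠ 0 := ne_of_gt (Ddb_pos hu hy)
  have hc : HasDerivAt (fun v : ℝ => exp ((v + y) / 2)) (exp ((u + y) / 2) * (1/2)) u := by
    have := (((hasDerivAt_id u).add_const y).div_const 2).exp
    simpa using this
  exact hc.div (hasDerivAt_D1 u y) hD'

lemma hasDerivAt_g2 {x : ℝ} (hx : 0 < x) {u : ℝ} (hu : 0 < u) :
    HasDerivAt (fun v => exp ((x + v) / 2) / Ddb x v)
      ((exp ((x + u) / 2) * (1/2) * Ddb x u -
        exp ((x + u) / 2) * (4 * exp (x + u) - 3 * exp u)) / (Ddb x u) ^ 2) u := by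
  have hD' : Ddb x u ≠ 0 := ne_of_gt (Ddb_pos hx hu)
  have hc : HasDerivAt (fun v : ℝ => exp ((x + v) / 2)) (exp ((x + u) / 2) * (1/2)) u := by
    have := (((hasDerivAt_id u).const_add x).div_const 2).exp
    simpa using this
  exact hc.div (hasDerivAt_D2 x u) hD'

theorem dumbbell_brioschi_curvature (x y : ℝ) (hx : 0 < x) (hy : 0 < y)
    (hdom : (exp x - 1) * (exp y - 1) < 4) :
    -(1 / (2 * Real.sqrt (Edb x y * Gdb x y))) *
        (deriv (fun u => deriv (fun v => Gdb v y) u / Real.sqrt (Edb u y * Gdb u y)) x +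
         deriv (fun u => deriv (fun v => Edb x v) u / Real.sqrt (Edb x u * Gdb x u)) y) =
      (2 * exp (x + y) - 1) / Ddb x y := by
  have hD := Ddb_pos hx hy
  have hD' : Ddb x y ≠ 0 := ne_of_gt hD
  have hterm1 : deriv (fun u => deriv (fun v => Gdb v y) u / Real.sqrt (Edb u y * Gdb u y)) x
      = (exp ((x + y) / 2) * (1/2) * Ddb x y -
         exp ((x + y) / 2) * (4 * exp (x + y) - 3 * exp x)) / (Ddb x y) ^ 2 := by
    have hev : (fun u => deriv (fun v => Gdb v y) u / Real.sqrt (Edb u y * Gdb u y))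
        =ᶠ[nhds x] (fun u => exp ((u + y) / 2) / Ddb u y) := by
      filter_upwards [eventually_gt_nhds hx] with u hu
      have hDu' : Ddb u y ≠ 0 := ne_of_gt (Ddb_pos hu hy)
      have hcu : exp ((u + y) / 2) ≠ 0 := (Real.exp_pos _).ne'
      have hsq2 : exp ((u + y) / 2) ^ 2 = exp (u + y) := by
        rw [sq, ← Real.exp_add, show (u+y)/2 + (u+y)/2 = u + y by ring]
      rw [(hasDerivAt_G1 hy hu).deriv, sqrtEG hu hy]
      field_simp
      rw [← hsq2]
    rw [hev.deriv_eq, (hasDerivAt_g1 hy hx).deriv]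
  have hterm2 : deriv (fun u => deriv (fun v => Edb x v) u / Real.sqrt (Edb x u * Gdb x u)) y
      = (exp ((x + y) / 2) * (1/2) * Ddb x y -
         exp ((x + y) / 2) * (4 * exp (x + y) - 3 * exp y)) / (Ddb x y) ^ 2 := by
    have hev : (fun u => deriv (fun v => Edb x v) u / Real.sqrt (Edb x u * Gdb x u))
        =ᶠ[nhds y] (fun u => exp ((x + u) / 2) / Ddb x u) := by
      filter_upwards [eventually_gt_nhds hy] with u hu
      have hDu' : Ddb x u ≠ 0 := ne_of_gt (Ddb_pos hx hu)
      have hcu : exp ((x + u) / 2) ≠ 0 := (Real.exp_pos _).ne'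
      have hsq2 : exp ((x + u) / 2) ^ 2 = exp (x + u) := by
        rw [sq, ← Real.exp_add, show (x+u)/2 + (x+u)/2 = x + u by ring]
      rw [(hasDerivAt_E2 hx hu).deriv, sqrtEG hx hu]
      field_simp
      rw [← hsq2]
    rw [hev.deriv_eq, (hasDerivAt_g2 hx hy).deriv]
  rw [hterm1, hterm2, sqrtEG hx hy]
  have hc : exp ((x + y) / 2) ≠ 0 := (Real.exp_pos _).ne'
  field_simp
  unfold Ddb
  ring
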